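/- Let (X_1,...,X_K, Y, S, W) be finite-valued random variables such that X_1,...,X_K are conditionally i.i.d. given (S,W). Then I(X_1; Y | S, W) ≤ (1/K)·I(X_1,...,X_K; Y | S, W). -/

import Mathlib

open Finset
open scoped Classical BigOperators

/-- Probability mass function of the random variable `X` under the (finite) measure `μ`. -/
noncomputable def distOf {Ω α : Type*} [Fintype Ω] (μ : Ω → ℝ) (X : Ω → α) (a : α) : ℝ :=
  ∑ ω, if X ω = a then μ ω else 0

/-- Shannon entropy (natural log) of a finite-valued random variable. -/
noncomputable def ent {Ω α : Type*} [Fintype Ω] [Fintype α] (μ : Ω → ℝ) (X : Ω → α) : ℝ :=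
  ∑ a, Real.negMulLog (distOf μ X a)

/-- Conditional Shannon entropy `H(X | Z)`. -/
noncomputable def condEnt {Ω α γ : Type*} [Fintype Ω] [Fintype α] [Fintype γ]
    (μ : Ω → ℝ) (X : Ω → α) (Z : Ω → γ) : ℝ :=
  ent μ (fun ω => (X ω, Z ω)) - ent μ Z

/-- The tuple of random variables indexed by the finite set `A`. -/
def restr {Ω ι α : Type*} (X : ι → Ω → α) (A : Finset ι) : Ω → (A → α) :=
  fun ω i => X i ω

/-- Conditional mutual information `I(X ; Y | Z)`. -/
noncomputable def condMI {Ω α β γ : Type*} [Fintype Ω] [Fintype α] [Fintype β] [Fintype γ]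
    (μ : Ω → ℝ) (X : Ω → α) (Y : Ω → β) (Z : Ω → γ) : ℝ :=
  condEnt μ X Z + condEnt μ Y Z - condEnt μ (fun ω => (X ω, Y ω)) Z

section basics
variable {Ω α γ δ : Type*} [Fintype Ω] (μ : Ω → ℝ)

lemma distOf_nonneg (hμ0 : ∀ ω, 0 ≤ μ ω) (X : Ω → α) (a : α) : 0 ≤ distOf μ X a := by
  refine Finset.sum_nonneg fun ω _ => ?_
  split <;> simp [hμ0]

lemma distOf_comp [Fintype γ] (T : Ω → γ) (f : γ → δ) (b : δ) :
    distOf μ (fun ω => f (T ω)) b = ∑ t, if f t = b then distOf μ T t else 0 := by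
  unfold distOf
  have : ∀ t : γ, (if f t = b then ∑ ω, if T ω = t then μ ω else 0 else 0)
      = ∑ ω, if T ω = t ∧ f t = b then μ ω else 0 := by
    intro t
    split
    · exact Finset.sum_congr rfl fun ω _ => by simp [*]
    · exact (Finset.sum_eq_zero fun ω _ => by simp [*]).symm
  simp_rw [this]
  rw [Finset.sum_comm]
  refine Finset.sum_congr rfl fun ω _ => ?_
  simp [ite_and, eq_comm]

lemma ent_comp_inj [Fintype γ] [Fintype δ] (T : Ω → γ) (f : γ → δ) (hf : Function.Injective f) :
    ent μ (fun ω => f (T ω)) = ent μ T := by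
  have h1 : ∀ t : γ, distOf μ (fun ω => f (T ω)) (f t) = distOf μ T t := by
    intro t
    unfold distOf
    exact Finset.sum_congr rfl fun ω _ => by rw [hf.eq_iff]
  have h2 : ∀ b : δ, b ∉ Finset.image f Finset.univ → distOf μ (fun ω => f (T ω)) b = 0 := by
    intro b hb
    refine Finset.sum_eq_zero fun ω _ => ?_
    rw [if_neg]
    intro h
    exact hb (Finset.mem_image.2 ⟨T ω, Finset.mem_univ _, h⟩)
  unfold ent
  rw [← Finset.sum_subset (Finset.subset_univ (Finset.image f Finset.univ))
    (fun b _ hb => by rw [h2 b hb, Real.negMulLog_zero]),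
    Finset.sum_image (fun x _ y _ h => hf h)]
  exact Finset.sum_congr rfl fun t _ => by rw [h1]

lemma ent_comp_congr [Fintype γ] [Fintype δ] (T T' : Ω → γ)
    (h : ∀ t, distOf μ T t = distOf μ T' t) (f : γ → δ) :
    ent μ (fun ω => f (T ω)) = ent μ (fun ω => f (T' ω)) := by
  unfold ent
  refine Finset.sum_congr rfl fun b _ => ?_
  rw [distOf_comp, distOf_comp]
  exact congrArg _ (Finset.sum_congr rfl fun t _ => by rw [h])

end basics

lemma gibbs2 {α β : Type*} [Fintype α] [Fintype β] (w : α → β → ℝ) (hw : ∀ x y, 0 ≤ w x y) :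
    (∑ x, ∑ y, Real.negMulLog (w x y)) + Real.negMulLog (∑ x, ∑ y, w x y)
      ≤ (∑ x, Real.negMulLog (∑ y, w x y)) + ∑ y, Real.negMulLog (∑ x, w x y) := by
  set a : α → ℝ := fun x => ∑ y, w x y with ha_def
  set b : β → ℝ := fun y => ∑ x, w x y with hb_def
  set M : ℝ := ∑ x, ∑ y, w x y with hM_def
  have ha : ∀ x, 0 ≤ a x := fun x => Finset.sum_nonneg fun y _ => hw x y
  have hb : ∀ y, 0 ≤ b y := fun y => Finset.sum_nonneg fun x _ => hw x y
  have hMa : M = ∑ x, a x := rfl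
  have hMb : M = ∑ y, b y := Finset.sum_comm

  have hM : 0 ≤ M := Finset.sum_nonneg fun x _ => ha x
  have hwa : ∀ x y, w x y ≤ a x := fun x y =>
    Finset.single_le_sum (fun y _ => hw x y) (Finset.mem_univ y)
  have hwb : ∀ x y, w x y ≤ b y := fun x y =>
    Finset.single_le_sum (fun x _ => hw x y) (Finset.mem_univ x)
  have haM : ∀ x, a x ≤ M := fun x => by
    rw [hMa]; exact Finset.single_le_sum (fun x _ => ha x) (Finset.mem_univ x)
  have key : ∀ x y, w x y - a x * b y / M
      ≤ w x y * Real.log (w x y) + w x y * Real.log M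
        - w x y * Real.log (a x) - w x y * Real.log (b y) := by
    intro x y
    rcases eq_or_lt_of_le (hw x y) with h0 | h0
    · rw [← h0]
      simp only [zero_mul, sub_zero, zero_sub, add_zero, zero_add]
      have : 0 ≤ a x * b y / M := div_nonneg (mul_nonneg (ha x) (hb y)) hM
      linarith
    · have hax : 0 < a x := lt_of_lt_of_le h0 (hwa x y)
      have hby : 0 < b y := lt_of_lt_of_le h0 (hwb x y)
      have hMpos : 0 < M := lt_of_lt_of_le hax (haM x)
      have hA : 0 < w x y * M / (a x * b y) := by positivity
      have hlog := Real.one_sub_inv_le_log_of_pos hA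
      have hlogeq : Real.log (w x y * M / (a x * b y))
          = Real.log (w x y) + Real.log M - (Real.log (a x) + Real.log (b y)) := by
        rw [Real.log_div (by positivity) (by positivity),
          Real.log_mul (ne_of_gt h0) (ne_of_gt hMpos),
          Real.log_mul (ne_of_gt hax) (ne_of_gt hby)]
      have h2 : w x y * (1 - (w x y * M / (a x * b y))⁻¹)
          ≤ w x y * Real.log (w x y * M / (a x * b y)) :=
        mul_le_mul_of_nonneg_left hlog (hw x y)
      have h3 : w x y * (1 - (w x y * M / (a x * b y))⁻¹) = w x y - a x * b y / M := by
        field_simp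
      rw [h3, hlogeq] at h2
      nlinarith [h2]
  have hsum : ∑ x, ∑ y, (w x y - a x * b y / M)
      ≤ ∑ x, ∑ y, (w x y * Real.log (w x y) + w x y * Real.log M
        - w x y * Real.log (a x) - w x y * Real.log (b y)) :=
    Finset.sum_le_sum fun x _ => Finset.sum_le_sum fun y _ => key x y
  have e1 : ∑ x, ∑ y, (w x y - a x * b y / M) = 0 := by
    have : ∀ x, ∑ y, (w x y - a x * b y / M) = a x - a x * M / M := by
      intro x
      rw [Finset.sum_sub_distrib]
      congr 1
      rw [← Finset.sum_div, ← Finset.mul_sum, ← hMb]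
    simp_rw [this]
    rw [Finset.sum_sub_distrib, ← hMa]
    rcases eq_or_lt_of_le hM with h | h
    · simp [← h]
    · rw [← Finset.sum_div, ← Finset.sum_mul, ← hMa, mul_div_assoc,
        div_self (ne_of_gt h), mul_one, sub_self]
  have e2 : ∑ x, ∑ y, (w x y * Real.log (w x y) + w x y * Real.log M
        - w x y * Real.log (a x) - w x y * Real.log (b y))
      = ((∑ x, Real.negMulLog (a x)) + ∑ y, Real.negMulLog (b y))
        - ((∑ x, ∑ y, Real.negMulLog (w x y)) + Real.negMulLog M) := by
    have t1 : ∑ x, ∑ y, w x y * Real.log M = M * Real.log M := by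
      simp_rw [← Finset.sum_mul]
      rfl
    have t2 : ∑ x, ∑ y, w x y * Real.log (a x) = ∑ x, a x * Real.log (a x) := by
      refine Finset.sum_congr rfl fun x _ => ?_
      rw [← Finset.sum_mul]
    have t3 : ∑ x, ∑ y, w x y * Real.log (b y) = ∑ y, b y * Real.log (b y) := by
      rw [Finset.sum_comm]
      refine Finset.sum_congr rfl fun y _ => ?_
      rw [← Finset.sum_mul]
    simp only [Finset.sum_sub_distrib, Finset.sum_add_distrib, t1, t2, t3, Real.negMulLog,
      neg_mul, Finset.sum_neg_distrib]
    ring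
  rw [e1, e2] at hsum
  linarith

section pis
variable {α : Type*} [Fintype α]

lemma sum_fn_succ {n : ℕ} (F : (Fin (n + 1) → α) → ℝ) :
    ∑ v, F v = ∑ a, ∑ w : Fin n → α, F (Fin.cons a w) := by
  rw [← Equiv.sum_comp (Fin.consEquiv fun _ => α) F, Fintype.sum_prod_type]
  rfl

lemma sum_prod_eq_pow (f : α → ℝ) : ∀ n : ℕ, ∑ v : Fin n → α, ∏ i, f (v i) = (∑ a, f a) ^ n := by
  intro n
  induction n with
  | zero => simp
  | succ n ih =>
    rw [sum_fn_succ fun v => ∏ i, f (v i)]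
    simp_rw [Fin.prod_univ_succ, Fin.cons_zero, Fin.cons_succ, ← Finset.mul_sum, ih,
      ← Finset.sum_mul, pow_succ]
    ring

lemma sum_negMulLog_prod (f : α → ℝ) (h1 : ∑ a, f a = 1) :
    ∀ n : ℕ, ∑ v : Fin n → α, Real.negMulLog (∏ i, f (v i))
      = n * ∑ a, Real.negMulLog (f a) := by
  intro n
  induction n with
  | zero => simp
  | succ n ih =>
    rw [sum_fn_succ fun v => Real.negMulLog (∏ i, f (v i))]
    simp_rw [Fin.prod_univ_succ, Fin.cons_zero, Fin.cons_succ, Real.negMulLog_mul,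
      Finset.sum_add_distrib, ← Finset.mul_sum, ih, ← Finset.sum_mul, sum_prod_eq_pow f n, h1]
    push_cast
    ring

lemma sum_prod_cond (f : α → ℝ) (a : α) (n : ℕ) :
    ∑ v : Fin (n + 1) → α, (if v 0 = a then ∏ i, f (v i) else 0)
      = f a * (∑ b, f b) ^ n := by
  rw [sum_fn_succ fun v => if v 0 = a then ∏ i, f (v i) else 0]
  simp_rw [Fin.cons_zero, Fin.prod_univ_succ, Fin.cons_zero, Fin.cons_succ]
  rw [Finset.sum_eq_single a]
  · simp [← Finset.mul_sum, sum_prod_eq_pow]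
  · intro b _ hb
    simp [hb]
  · intro h
    exact absurd (Finset.mem_univ _) h

lemma pow_one_of (x : ℝ) (hx : 0 ≤ x) {n : ℕ} (hn : n ≠ 0) (h : x ^ n = 1) : x = 1 := by
  rcases lt_trichotomy x 1 with h1 | h1 | h1
  · have := pow_lt_one₀ hx h1 hn
    rw [h] at this
    exact absurd this (lt_irrefl 1)
  · exact h1
  · have := one_lt_pow₀ h1 hn
    rw [h] at this
    exact absurd this (lt_irrefl 1)
end pis

lemma condMI_nonneg {Ω α β γ : Type*} [Fintype Ω] [Fintype α] [Fintype β] [Fintype γ]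
    (μ : Ω → ℝ) (hμ0 : ∀ ω, 0 ≤ μ ω) (X : Ω → α) (Y : Ω → β) (Z : Ω → γ) :
    0 ≤ condMI μ X Y Z := by
  set p : α → β → γ → ℝ := fun x y z => distOf μ (fun ω => ((X ω, Y ω), Z ω)) ((x, y), z)
    with hp_def
  have hp : ∀ x y z, 0 ≤ p x y z := fun x y z =>
    Finset.sum_nonneg fun ω _ => by split <;> simp [hμ0]
  have hXZ : ∀ x z, distOf μ (fun ω => (X ω, Z ω)) (x, z) = ∑ y, p x y z := by
    intro x z
    simp only [hp_def, distOf]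
    rw [Finset.sum_comm]
    refine Finset.sum_congr rfl fun ω _ => ?_
    by_cases h1 : X ω = x <;> by_cases h2 : Z ω = z <;>
      simp [h1, h2, Prod.ext_iff]
  have hYZ : ∀ y z, distOf μ (fun ω => (Y ω, Z ω)) (y, z) = ∑ x, p x y z := by
    intro y z
    simp only [hp_def, distOf]
    rw [Finset.sum_comm]
    refine Finset.sum_congr rfl fun ω _ => ?_
    by_cases h1 : Y ω = y <;> by_cases h2 : Z ω = z <;>
      simp [h1, h2, Prod.ext_iff]
  have hZ : ∀ z, distOf μ Z z = ∑ x, ∑ y, p x y z := by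
    intro z
    rw [show (∑ x, ∑ y, p x y z) = ∑ xy : α × β, p xy.1 xy.2 z
      from (Fintype.sum_prod_type (f := fun xy : α × β => p xy.1 xy.2 z)).symm]
    simp only [hp_def, distOf]
    rw [Finset.sum_comm]
    refine Finset.sum_congr rfl fun ω _ => ?_
    by_cases h2 : Z ω = z
    · symm
      rw [Finset.sum_eq_single (X ω, Y ω)]
      · simp [h2]
      · intro b _ hb
        apply if_neg
        simp only [Prod.mk.injEq]
        rintro ⟨⟨h3, h4⟩, -⟩
        exact hb (Prod.ext_iff.2 ⟨h3.symm, h4.symm⟩)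
      · intro h
        exact absurd (Finset.mem_univ _) h
    · simp [h2, Prod.ext_iff]
  have eXZ : ent μ (fun ω => (X ω, Z ω)) = ∑ z, ∑ x, Real.negMulLog (∑ y, p x y z) := by
    rw [ent, Fintype.sum_prod_type, Finset.sum_comm]
    exact Finset.sum_congr rfl fun z _ => Finset.sum_congr rfl fun x _ => by rw [hXZ]
  have eYZ : ent μ (fun ω => (Y ω, Z ω)) = ∑ z, ∑ y, Real.negMulLog (∑ x, p x y z) := by
    rw [ent, Fintype.sum_prod_type, Finset.sum_comm]
    exact Finset.sum_congr rfl fun z _ => Finset.sum_congr rfl fun y _ => by rw [hYZ]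
  have eZ : ent μ Z = ∑ z, Real.negMulLog (∑ x, ∑ y, p x y z) :=
    Finset.sum_congr rfl fun z _ => by rw [hZ]
  have eXYZ : ent μ (fun ω => ((X ω, Y ω), Z ω))
      = ∑ z, ∑ x, ∑ y, Real.negMulLog (p x y z) := by
    rw [ent, Fintype.sum_prod_type, Finset.sum_comm]
    refine Finset.sum_congr rfl fun z _ => ?_
    rw [Fintype.sum_prod_type]
  have key : ∑ z, ((∑ x, ∑ y, Real.negMulLog (p x y z))
        + Real.negMulLog (∑ x, ∑ y, p x y z))
      ≤ ∑ z, ((∑ x, Real.negMulLog (∑ y, p x y z))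
        + ∑ y, Real.negMulLog (∑ x, p x y z)) :=
    Finset.sum_le_sum fun z _ => gibbs2 (fun x y => p x y z) (fun x y => hp x y z)
  simp only [Finset.sum_add_distrib] at key
  simp only [condMI, condEnt, eXZ, eYZ, eZ, eXYZ]
  linarith

lemma condEnt_pair_le {Ω α β γ : Type*} [Fintype Ω] [Fintype α] [Fintype β] [Fintype γ]
    (μ : Ω → ℝ) (hμ0 : ∀ ω, 0 ≤ μ ω) (A : Ω → α) (B : Ω → β) (Z : Ω → γ) :
    condEnt μ (fun ω => (A ω, B ω)) Z ≤ condEnt μ A Z + condEnt μ B Z := by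
  have h := condMI_nonneg μ hμ0 A B Z
  unfold condMI at h
  linarith

section tuples
variable {Ω α γ : Type*} [Fintype Ω] [Fintype α] [Fintype γ] (μ : Ω → ℝ)

lemma condEnt_comp_inj {δ : Type*} [Fintype δ] (T : Ω → δ) (f : δ → α) (hf : Function.Injective f)
    (Z : Ω → γ) : condEnt μ (fun ω => f (T ω)) Z = condEnt μ T Z := by
  unfold condEnt
  congr 1
  have hinj : Function.Injective (fun p : δ × γ => (f p.1, p.2)) := by
    rintro ⟨a, b⟩ ⟨c, d⟩ h
    obtain ⟨h1, h2⟩ := Prod.ext_iff.1 h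
    exact Prod.ext_iff.2 ⟨hf h1, h2⟩
  exact ent_comp_inj μ (fun ω => (T ω, Z ω)) (fun p : δ × γ => (f p.1, p.2)) hinj

lemma condEnt_unique {δ : Type*} [Fintype δ] [Unique δ] (T : Ω → δ) (Z : Ω → γ) :
    condEnt μ T Z = 0 := by
  unfold condEnt
  rw [sub_eq_zero]
  have : (fun ω => (T ω, Z ω)) = fun ω => (fun z : γ => ((default : δ), z)) (Z ω) := by
    funext ω
    rw [Unique.eq_default (T ω)]
  rw [this, ent_comp_inj μ Z _ (fun p q h => (Prod.ext_iff.1 h).2)]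

lemma tuple_succ_eq {n : ℕ} (X : Fin (n + 1) → Ω → α) :
    (fun ω => fun i => X i ω)
      = fun ω => (fun p : α × (Fin n → α) => (Fin.cons p.1 p.2 : Fin (n + 1) → α))
          ((X 0 ω, fun i : Fin n => X i.succ ω)) := by
  funext ω
  ext i
  induction i using Fin.cases <;> simp

lemma condEnt_tuple_le (hμ0 : ∀ ω, 0 ≤ μ ω) {n : ℕ} (X : Fin n → Ω → α) (Z : Ω → γ) :
    condEnt μ (fun ω => fun i => X i ω) Z ≤ ∑ i, condEnt μ (X i) Z := by
  induction n with
  | zero =>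
    simp only [Finset.univ_eq_empty, Finset.sum_empty]
    exact le_of_eq (condEnt_unique μ _ _)
  | succ n ih =>
    have hinj : Function.Injective
        (fun p : α × (Fin n → α) => (Fin.cons p.1 p.2 : Fin (n + 1) → α)) := by
      rintro ⟨a, w⟩ ⟨b, v⟩ h
      obtain ⟨h1, h2⟩ := Fin.cons_injective2 h
      exact Prod.ext_iff.2 ⟨h1, h2⟩
    have e1 : condEnt μ (fun ω => fun i => X i ω) Z
        = condEnt μ (fun ω => (X 0 ω, fun i : Fin n => X i.succ ω)) Z := by
      conv_lhs => rw [tuple_succ_eq X]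
      exact condEnt_comp_inj μ (fun ω => (X 0 ω, fun i : Fin n => X i.succ ω))
        (fun p : α × (Fin n → α) => (Fin.cons p.1 p.2 : Fin (n + 1) → α)) hinj Z
    rw [e1]
    calc condEnt μ (fun ω => (X 0 ω, fun i : Fin n => X i.succ ω)) Z
        ≤ condEnt μ (X 0) Z + condEnt μ (fun ω => fun i : Fin n => X i.succ ω) Z :=
          condEnt_pair_le μ hμ0 _ _ Z
      _ ≤ condEnt μ (X 0) Z + ∑ i : Fin n, condEnt μ (X i.succ) Z := by
          have := ih (fun i => X i.succ)
          linarith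
      _ = ∑ i, condEnt μ (X i) Z := (Fin.sum_univ_succ fun i => condEnt μ (X i) Z).symm
end tuples

section iid
variable {Ω α ζ : Type*} [Fintype Ω] [Fintype α] [Fintype ζ]

lemma distOf_snd (μ : Ω → ℝ) {A : Type*} [Fintype A] (T : Ω → A) (U : Ω → ζ) (b : ζ) :
    ∑ a, distOf μ (fun ω => (T ω, U ω)) (a, b) = distOf μ U b := by
  unfold distOf
  rw [Finset.sum_comm]
  refine Finset.sum_congr rfl fun ω _ => ?_
  by_cases h : U ω = b
  · rw [if_pos h, Finset.sum_eq_single (T ω)]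
    · rw [if_pos (by simp [h])]
    · intro c _ hc
      rw [if_neg]
      intro hcc
      simp only [Prod.mk.injEq] at hcc
      exact hc hcc.1.symm
    · intro hh
      exact absurd (Finset.mem_univ _) hh
  · rw [if_neg h]
    refine Finset.sum_eq_zero fun c _ => ?_
    rw [if_neg]
    intro hcc
    simp only [Prod.mk.injEq] at hcc
    exact h hcc.2

lemma iid_condEnt (μ : Ω → ℝ) (hμ0 : ∀ ω, 0 ≤ μ ω)
    {n : ℕ} (X : Fin (n + 1) → Ω → α) (Z : Ω → ζ) (q : ζ → α → ℝ) (hq : ∀ z a, 0 ≤ q z a)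
    (hiid : ∀ (v : Fin (n + 1) → α) (z : ζ),
      distOf μ (fun ω => ((fun i => X i ω), Z ω)) (v, z) = distOf μ Z z * ∏ i, q z (v i)) :
    condEnt μ (fun ω => fun i => X i ω) Z = (n + 1 : ℝ) * condEnt μ (X 0) Z := by
  set pZ : ζ → ℝ := fun z => distOf μ Z z with hpZ
  have hpZ0 : ∀ z, 0 ≤ pZ z := fun z => distOf_nonneg μ hμ0 Z z
  set HQ : ζ → ℝ := fun z => ∑ a, Real.negMulLog (q z a) with hHQ
  -- normalization of q at points of positive mass
  have hnorm : ∀ z, pZ z ≠ 0 → ∑ a, q z a = 1 := by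
    intro z hz
    have h1 : ∑ v : Fin (n + 1) → α, distOf μ (fun ω => ((fun i => X i ω), Z ω)) (v, z)
        = pZ z := distOf_snd μ _ Z z
    rw [Finset.sum_congr rfl (fun v _ => hiid v z), ← Finset.mul_sum,
      sum_prod_eq_pow (q z) (n + 1)] at h1
    have : (∑ a, q z a) ^ (n + 1) = 1 := by
      exact mul_left_cancel₀ hz (h1.trans (mul_one _).symm)
    exact pow_one_of _ (Finset.sum_nonneg fun a _ => hq z a) (Nat.succ_ne_zero n) this
  -- entropy of the tuple
  have eT : ent μ (fun ω => ((fun i => X i ω), Z ω))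
      = ent μ Z + (n + 1 : ℝ) * ∑ z, pZ z * HQ z := by
    rw [ent, Fintype.sum_prod_type, Finset.sum_comm]
    have : ∀ z, ∑ v : Fin (n + 1) → α,
        Real.negMulLog (distOf μ (fun ω => ((fun i => X i ω), Z ω)) (v, z))
        = Real.negMulLog (pZ z) + (n + 1 : ℝ) * (pZ z * HQ z) := by
      intro z
      rw [Finset.sum_congr rfl fun v _ => by rw [hiid v z]]
      by_cases hz : pZ z = 0
      · have h0 : distOf μ Z z = 0 := hz
        simp [h0, hz]
      · have hnz := hnorm z hz
        simp_rw [Real.negMulLog_mul, Finset.sum_add_distrib, ← Finset.sum_mul,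
          ← Finset.mul_sum, sum_prod_eq_pow (q z) (n + 1), hnz,
          sum_negMulLog_prod (q z) hnz (n + 1)]
        push_cast
        ring
    rw [Finset.sum_congr rfl fun z _ => this z, Finset.sum_add_distrib, ← Finset.mul_sum]
    rfl
  -- marginal law of X 0
  have hmarg : ∀ (a : α) (z : ζ), distOf μ (fun ω => (X 0 ω, Z ω)) (a, z)
      = pZ z * (q z a * (∑ b, q z b) ^ n) := by
    intro a z
    have this1 : ∀ v : Fin (n + 1) → α,
        (if v 0 = a then distOf μ (fun ω => ((fun i => X i ω), Z ω)) (v, z) else 0)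
          = ∑ ω, if ((fun i => X i ω, Z ω) = (v, z) ∧ v 0 = a) then μ ω else 0 := by
      intro v
      by_cases hv : v 0 = a
      · rw [if_pos hv]
        simp only [distOf]
        exact Finset.sum_congr rfl fun ω _ => by simp [hv]
      · rw [if_neg hv]
        refine (Finset.sum_eq_zero fun ω _ => ?_).symm
        rw [if_neg]
        exact fun hc => hv hc.2
    have step : distOf μ (fun ω => (X 0 ω, Z ω)) (a, z)
        = ∑ v : Fin (n + 1) → α,
            (if v 0 = a then distOf μ (fun ω => ((fun i => X i ω), Z ω)) (v, z) else 0) := by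
      refine Eq.trans ?_ (Finset.sum_congr rfl fun v _ => (this1 v).symm)
      simp only [distOf]
      rw [Finset.sum_comm]
      refine Finset.sum_congr rfl fun ω _ => ?_
      by_cases h1 : X 0 ω = a <;> by_cases h2 : Z ω = z
      · rw [if_pos (by simp [h1, h2]), Finset.sum_eq_single (fun i => X i ω)]
        · rw [if_pos (by simp [h1, h2])]
        · intro v _ hv
          rw [if_neg]
          intro hc
          simp only [Prod.mk.injEq] at hc
          exact hv hc.1.1.symm
        · intro hh
          exact absurd (Finset.mem_univ _) hh
      all_goals
        rw [if_neg (by simp [h1, h2, Prod.ext_iff])]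
        refine (Finset.sum_eq_zero fun v _ => ?_).symm
        rw [if_neg]
        intro hc
        simp only [Prod.mk.injEq] at hc
        first
          | exact h2 hc.1.2
          | exact h1 ((congrFun hc.1.1 0).trans hc.2)
    calc distOf μ (fun ω => (X 0 ω, Z ω)) (a, z)
        = ∑ v : Fin (n + 1) → α,
            (if v 0 = a then distOf μ (fun ω => ((fun i => X i ω), Z ω)) (v, z) else 0) := step
      _ = ∑ v : Fin (n + 1) → α,
            (if v 0 = a then distOf μ Z z * ∏ i, q z (v i) else 0) :=
          Finset.sum_congr rfl fun v _ => by rw [hiid v z]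
      _ = distOf μ Z z * ∑ v : Fin (n + 1) → α, (if v 0 = a then ∏ i, q z (v i) else 0) := by
          rw [Finset.mul_sum]
          exact Finset.sum_congr rfl fun v _ => by split <;> simp
      _ = pZ z * (q z a * (∑ b, q z b) ^ n) := by rw [sum_prod_cond (q z) a n]
  -- entropy of (X 0, Z)
  have eX0 : ent μ (fun ω => (X 0 ω, Z ω)) = ent μ Z + ∑ z, pZ z * HQ z := by
    rw [ent, Fintype.sum_prod_type, Finset.sum_comm]
    have : ∀ z, ∑ a, Real.negMulLog (distOf μ (fun ω => (X 0 ω, Z ω)) (a, z))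
        = Real.negMulLog (pZ z) + pZ z * HQ z := by
      intro z
      rw [Finset.sum_congr rfl fun a _ => by rw [hmarg a z]]
      by_cases hz : pZ z = 0
      · simp [hz]
      · have hnz := hnorm z hz
        rw [hnz]
        simp only [one_pow, mul_one]
        simp_rw [Real.negMulLog_mul, Finset.sum_add_distrib, ← Finset.sum_mul,
          ← Finset.mul_sum, hnz]
        have hqz : HQ z = ∑ i : α, Real.negMulLog (q z i) := rfl
        rw [hqz]
        ring
    rw [Finset.sum_congr rfl fun z _ => this z, Finset.sum_add_distrib]
    rfl
  -- conclusion
  unfold condEnt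
  rw [eT, eX0]
  ring
end iid

theorem stmt3 {Ω α β σ τ : Type*} [Fintype Ω] [Fintype α] [Fintype β] [Fintype σ] [Fintype τ]
    {K : ℕ} (hK : 0 < K)
    (μ : Ω → ℝ) (hμ0 : ∀ ω, 0 ≤ μ ω) (hμ1 : ∑ ω, μ ω = 1)
    (X : Fin K → Ω → α) (Y : Ω → β) (S : Ω → σ) (W : Ω → τ)
    -- `X_1, …, X_K` are conditionally i.i.d. given `(S, W)`
    (q : σ × τ → α → ℝ) (hq : ∀ sw a, 0 ≤ q sw a)
    (hiid : ∀ (v : Fin K → α) (sw : σ × τ),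
      distOf μ (fun ω => ((fun i => X i ω), (S ω, W ω))) (v, sw)
        = distOf μ (fun ω => (S ω, W ω)) sw * ∏ i, q sw (v i))
    -- the joint law of `(X_1, …, X_K, Y, S, W)` is invariant under permutations of the
    -- `X`-indices (as in the paper, where the collusion channel is permutation-invariant)
    (hperm : ∀ (π : Equiv.Perm (Fin K)) (v : Fin K → α) (z : β × σ × τ),
      distOf μ (fun ω => ((fun i => X (π i) ω), (Y ω, S ω, W ω))) (v, z)
        = distOf μ (fun ω => ((fun i => X i ω), (Y ω, S ω, W ω))) (v, z)) :
    condMI μ (X ⟨0, hK⟩) Y (fun ω => (S ω, W ω))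
      ≤ (1 / (K : ℝ)) * condMI μ (fun ω => fun i => X i ω) Y (fun ω => (S ω, W ω)) := by
  classical
  obtain ⟨n, rfl⟩ : ∃ n, K = n + 1 := ⟨K - 1, (Nat.succ_pred_eq_of_pos hK).symm⟩
  have hi0 : (⟨0, hK⟩ : Fin (n + 1)) = 0 := rfl
  rw [hi0]
  -- permutation symmetry: every `X i` has the same joint law with `(Y, S, W)`
  have hsym : ∀ i : Fin (n + 1),
      condEnt μ (X i) (fun ω => (S ω, W ω)) = condEnt μ (X 0) (fun ω => (S ω, W ω)) ∧
      condEnt μ (X i) (fun ω => (Y ω, (S ω, W ω)))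
        = condEnt μ (X 0) (fun ω => (Y ω, (S ω, W ω))) := by
    intro i
    have hπ : Equiv.swap (0 : Fin (n + 1)) i 0 = i := Equiv.swap_apply_left 0 i
    have hU : ∀ t : (Fin (n + 1) → α) × (β × σ × τ),
        distOf μ (fun ω => ((fun j => X (Equiv.swap (0 : Fin (n + 1)) i j) ω),
          (Y ω, S ω, W ω))) t
          = distOf μ (fun ω => ((fun j => X j ω), (Y ω, S ω, W ω))) t := by
      rintro ⟨v, z⟩
      exact hperm (Equiv.swap 0 i) v z
    constructor
    · unfold condEnt
      have h1 : ent μ (fun ω => (X (Equiv.swap (0 : Fin (n + 1)) i 0) ω, (S ω, W ω)))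
          = ent μ (fun ω => (X 0 ω, (S ω, W ω))) :=
        ent_comp_congr μ _ _ hU
          (fun p : (Fin (n + 1) → α) × (β × σ × τ) => (p.1 0, (p.2.2.1, p.2.2.2)))
      rw [hπ] at h1
      rw [h1]
    · unfold condEnt
      have h1 : ent μ (fun ω => (X (Equiv.swap (0 : Fin (n + 1)) i 0) ω, (Y ω, (S ω, W ω))))
          = ent μ (fun ω => (X 0 ω, (Y ω, (S ω, W ω)))) :=
        ent_comp_congr μ _ _ hU
          (fun p : (Fin (n + 1) → α) × (β × σ × τ) =>
            (p.1 0, (p.2.1, (p.2.2.1, p.2.2.2))))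
      rw [hπ] at h1
      rw [h1]
  -- conditional mutual information in terms of conditional entropies
  have halt : ∀ (A : Ω → α), condMI μ A Y (fun ω => (S ω, W ω))
      = condEnt μ A (fun ω => (S ω, W ω)) - condEnt μ A (fun ω => (Y ω, (S ω, W ω))) := by
    intro A
    unfold condMI condEnt
    have h1 : ent μ (fun ω => ((A ω, Y ω), (S ω, W ω)))
        = ent μ (fun ω => (A ω, (Y ω, (S ω, W ω)))) :=
      (ent_comp_inj μ (fun ω => (A ω, (Y ω, (S ω, W ω))))
        (fun p : α × (β × σ × τ) => ((p.1, p.2.1), (p.2.2.1, p.2.2.2)))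
        (fun p q h => by
          obtain ⟨h1, h2⟩ := Prod.ext_iff.1 h
          obtain ⟨h11, h12⟩ := Prod.ext_iff.1 h1
          obtain ⟨h21, h22⟩ := Prod.ext_iff.1 h2
          exact Prod.ext_iff.2 ⟨h11, Prod.ext_iff.2 ⟨h12, Prod.ext_iff.2 ⟨h21, h22⟩⟩⟩))
    rw [h1]
    ring
  have haltT : condMI μ (fun ω => fun i => X i ω) Y (fun ω => (S ω, W ω))
      = condEnt μ (fun ω => fun i => X i ω) (fun ω => (S ω, W ω))
        - condEnt μ (fun ω => fun i => X i ω) (fun ω => (Y ω, (S ω, W ω))) := by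
    unfold condMI condEnt
    have h1 : ent μ (fun ω => (((fun i => X i ω), Y ω), (S ω, W ω)))
        = ent μ (fun ω => ((fun i => X i ω), (Y ω, (S ω, W ω)))) :=
      (ent_comp_inj μ (fun ω => ((fun i => X i ω), (Y ω, (S ω, W ω))))
        (fun p : (Fin (n + 1) → α) × (β × σ × τ) => ((p.1, p.2.1), (p.2.2.1, p.2.2.2)))
        (fun p q h => by
          obtain ⟨h1, h2⟩ := Prod.ext_iff.1 h
          obtain ⟨h11, h12⟩ := Prod.ext_iff.1 h1
          obtain ⟨h21, h22⟩ := Prod.ext_iff.1 h2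
          exact Prod.ext_iff.2 ⟨h11, Prod.ext_iff.2 ⟨h12, Prod.ext_iff.2 ⟨h21, h22⟩⟩⟩))
    rw [h1]
    ring
  -- i.i.d. step
  have hiidEnt : condEnt μ (fun ω => fun i => X i ω) (fun ω => (S ω, W ω))
      = (n + 1 : ℝ) * condEnt μ (X 0) (fun ω => (S ω, W ω)) :=
    iid_condEnt μ hμ0 X (fun ω => (S ω, W ω)) q hq hiid
  -- subadditivity step
  have hsub : condEnt μ (fun ω => fun i => X i ω) (fun ω => (Y ω, (S ω, W ω)))
      ≤ ∑ i, condEnt μ (X i) (fun ω => (Y ω, (S ω, W ω))) :=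
    condEnt_tuple_le μ hμ0 X (fun ω => (Y ω, (S ω, W ω)))
  have hsub' : condEnt μ (fun ω => fun i => X i ω) (fun ω => (Y ω, (S ω, W ω)))
      ≤ (n + 1 : ℝ) * condEnt μ (X 0) (fun ω => (Y ω, (S ω, W ω))) := by
    refine hsub.trans (le_of_eq ?_)
    rw [Finset.sum_congr rfl fun i _ => (hsym i).2, Finset.sum_const, Finset.card_univ,
      Fintype.card_fin, nsmul_eq_mul]
    push_cast
    ring
  -- combine
  have hmain : ((n : ℝ) + 1) * condMI μ (X 0) Y (fun ω => (S ω, W ω))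
      ≤ condMI μ (fun ω => fun i => X i ω) Y (fun ω => (S ω, W ω)) := by
    rw [haltT, halt (X 0), hiidEnt]
    nlinarith [hsub']
  have hKpos : (0 : ℝ) < ((n + 1 : ℕ) : ℝ) := by positivity
  rw [← sub_nonneg]
  have hexp : 1 / (((n + 1 : ℕ) : ℝ)) * condMI μ (fun ω => fun i => X i ω) Y
        (fun ω => (S ω, W ω)) - condMI μ (X 0) Y (fun ω => (S ω, W ω))
      = (1 / (((n + 1 : ℕ) : ℝ))) * (condMI μ (fun ω => fun i => X i ω) Y
          (fun ω => (S ω, W ω)) - ((n : ℝ) + 1) * condMI μ (X 0) Y (fun ω => (S ω, W ω))) := by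
    field_simp
    push_cast
    ring
  rw [hexp]
  have h2 : 0 ≤ condMI μ (fun ω => fun i => X i ω) Y (fun ω => (S ω, W ω))
      - ((n : ℝ) + 1) * condMI μ (X 0) Y (fun ω => (S ω, W ω)) := by linarith
  positivity
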